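/- arXiv:0901.0375 — 3 statements merged into one kernel-verified Lean document; each statement's English description precedes it below -/
import Mathlib

section
/- For all p, p₁ ∈ ℝ³ the Moller velocity v_M = g·s^{1/2}/(p₀p₁₀) satisfies v_M² = |p/p₀ − p₁/p₁₀|² − |p×p₁|²/(p₀p₁₀)², i.e., g²·s = p₀²p₁₀²·|p/p₀ − p₁/p₁₀|² − |p×p₁|². -/
noncomputable section
open Real
open scoped RealInnerProductSpace

/-- ℝ³ with the Euclidean norm. -/
abbrev E3 := EuclideanSpace ℝ (Fin 3)

namespace EnskogK

/-- the relativistic energy `p₀ = √(1+|p|²)` -/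
def p0 (p : E3) : ℝ := Real.sqrt (1 + ‖p‖ ^ 2)

/-- the cross product on ℝ³ -/
def cross (u v : E3) : E3 :=
  (WithLp.equiv 2 (Fin 3 → ℝ)).symm
    (crossProduct ((WithLp.equiv 2 (Fin 3 → ℝ)) u) ((WithLp.equiv 2 (Fin 3 → ℝ)) v))

/-- the relative momentum `g = (1/2)√(|p₁−p|² − (p₁₀−p₀)²)` -/
def gmom (p p₁ : E3) : ℝ :=
  (1 / 2) * Real.sqrt (‖p₁ - p‖ ^ 2 - (p0 p₁ - p0 p) ^ 2)

/-- `s = (p₀+p₁₀)² − |p+p₁|²` -/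
def smom (p p₁ : E3) : ℝ := (p0 p + p0 p₁) ^ 2 - ‖p + p₁‖ ^ 2

end EnskogK

open EnskogK

lemma norm_sq_E3 (u : E3) : ‖u‖ ^ 2 = ∑ i, u i ^ 2 := by
  rw [EuclideanSpace.norm_eq, Real.sq_sqrt (by positivity)]
  simp [sq_abs]

lemma cross_norm_sq (u v : E3) :
    ‖cross u v‖ ^ 2 = ‖u‖ ^ 2 * ‖v‖ ^ 2 - ⟪u, v⟫ ^ 2 := by
  rw [cross, norm_sq_E3, norm_sq_E3, norm_sq_E3]
  simp only [PiLp.inner_apply, RCLike.inner_apply, conj_trivial]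
  simp only [Fin.sum_univ_three, crossProduct]
  simp [WithLp.equiv_symm_apply, PiLp.toLp_apply]
  ring

/-- The Moller velocity `v_M = g·s^{1/2}/(p₀p₁₀)` satisfies
`v_M² = |p/p₀ − p₁/p₁₀|² − |p×p₁|²/(p₀p₁₀)²`, i.e.
`g²·s = p₀²p₁₀²·|p/p₀ − p₁/p₁₀|² − |p×p₁|²`. -/
theorem moller_velocity_sq (p p₁ : E3) :
    gmom p p₁ ^ 2 * smom p p₁ =
      (p0 p) ^ 2 * (p0 p₁) ^ 2 * ‖(p0 p)⁻¹ • p - (p0 p₁)⁻¹ • p₁‖ ^ 2 -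
        ‖cross p p₁‖ ^ 2 := by
  set a := p0 p with ha
  set b := p0 p₁ with hb
  set t : ℝ := ⟪p, p₁⟫ with htdef
  have hX : a ^ 2 = 1 + ‖p‖ ^ 2 := Real.sq_sqrt (by positivity)
  have hY : b ^ 2 = 1 + ‖p₁‖ ^ 2 := Real.sq_sqrt (by positivity)
  have hapos : 0 < a := Real.sqrt_pos.2 (by positivity)
  have hbpos : 0 < b := Real.sqrt_pos.2 (by positivity)
  have habs : |t| ≤ ‖p‖ * ‖p₁‖ := abs_real_inner_le_norm p p₁
  have ht2 : t ^ 2 ≤ ‖p‖ ^ 2 * ‖p₁‖ ^ 2 := by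
    nlinarith [abs_nonneg t, sq_abs t, norm_nonneg p, norm_nonneg p₁]
  have hab : 1 + t ≤ a * b := by
    rcases le_or_gt (1 + t) 0 with h | h
    · nlinarith [mul_pos hapos hbpos]
    · have hsq : (1 + t) ^ 2 ≤ (a * b) ^ 2 := by
        have : (a * b) ^ 2 = (1 + ‖p‖ ^ 2) * (1 + ‖p₁‖ ^ 2) := by
          rw [mul_pow, hX, hY]
        nlinarith [sq_nonneg (‖p‖ - ‖p₁‖), le_abs_self t, ht2, norm_nonneg p, norm_nonneg p₁]
      nlinarith [mul_pos hapos hbpos]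
  have hsub : ‖p₁ - p‖ ^ 2 = ‖p₁‖ ^ 2 - 2 * t + ‖p‖ ^ 2 := by
    rw [norm_sub_sq_real, real_inner_comm]
  have hnn : 0 ≤ ‖p₁ - p‖ ^ 2 - (b - a) ^ 2 := by
    rw [hsub]; nlinarith
  have hg : gmom p p₁ ^ 2 = (1 / 4) * (‖p₁ - p‖ ^ 2 - (b - a) ^ 2) := by
    rw [gmom, mul_pow, Real.sq_sqrt hnn]; norm_num
  have hadd : ‖p + p₁‖ ^ 2 = ‖p‖ ^ 2 + 2 * t + ‖p₁‖ ^ 2 := by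
    rw [norm_add_sq_real]
  have hns : ‖a⁻¹ • p - b⁻¹ • p₁‖ ^ 2
      = a⁻¹ ^ 2 * ‖p‖ ^ 2 - 2 * (a⁻¹ * b⁻¹ * t) + b⁻¹ ^ 2 * ‖p₁‖ ^ 2 := by
    rw [norm_sub_sq_real, norm_smul, norm_smul, real_inner_smul_left,
      real_inner_smul_right]
    rw [norm_inv, norm_inv, Real.norm_of_nonneg hapos.le, Real.norm_of_nonneg hbpos.le]
    ring
  rw [hg, smom, ← ha, ← hb, hadd, hsub, hns, cross_norm_sq, ← htdef]
  have hX' : ‖p‖ ^ 2 = a ^ 2 - 1 := by linarith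
  have hY' : ‖p₁‖ ^ 2 = b ^ 2 - 1 := by linarith
  rw [hX', hY']
  field_simp
  ring
end
end

section
/- For all p, p₁ ∈ ℝ³ the Moller velocity v_M = g·s^{1/2}/(p₀p₁₀) satisfies the bound v_M ≤ |p/p₀ − p₁/p₁₀|. -/
noncomputable section
open Real
open scoped RealInnerProductSpace

open EnskogK

set_option maxHeartbeats 1000000 in
/-- The Moller velocity `v_M = g·s^{1/2}/(p₀p₁₀)` satisfies
`v_M ≤ |p/p₀ − p₁/p₁₀|`. -/
theorem moller_velocity_le (p p₁ : E3) :
    gmom p p₁ * Real.sqrt (smom p p₁) / (p0 p * p0 p₁) ≤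
      ‖(p0 p)⁻¹ • p - (p0 p₁)⁻¹ • p₁‖ := by
  set a := ‖p‖ with ha_def
  set b := ‖p₁‖ with hb_def
  set t := ⟪p, p₁⟫ with ht_def
  set E := p0 p with hE_def
  set F := p0 p₁ with hF_def
  have ha : 0 ≤ a := norm_nonneg _
  have hb : 0 ≤ b := norm_nonneg _
  have hE2 : E ^ 2 = 1 + a ^ 2 := Real.sq_sqrt (by positivity)
  have hF2 : F ^ 2 = 1 + b ^ 2 := Real.sq_sqrt (by positivity)
  have hE1 : 1 ≤ E := by
    have h := Real.sqrt_le_sqrt (show (1:ℝ) ≤ 1 + a ^ 2 by nlinarith)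
    rwa [Real.sqrt_one] at h
  have hF1 : 1 ≤ F := by
    have h := Real.sqrt_le_sqrt (show (1:ℝ) ≤ 1 + b ^ 2 by nlinarith)
    rwa [Real.sqrt_one] at h
  have hEpos : 0 < E := lt_of_lt_of_le one_pos hE1
  have hFpos : 0 < F := lt_of_lt_of_le one_pos hF1
  have habs : |t| ≤ a * b := abs_real_inner_le_norm p p₁
  have ht1 : t ≤ a * b := le_trans (le_abs_self t) habs
  have ht2 : -(a*b) ≤ t := neg_le_of_abs_le habs
  have ht : t ^ 2 ≤ a ^ 2 * b ^ 2 := by nlinarith [abs_nonneg t, sq_abs t]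
  have hcomm : ⟪p₁, p⟫ = t := real_inner_comm _ _
  have hs : smom p p₁ = 2 + 2 * (E * F) - 2 * t := by
    rw [smom, norm_add_sq_real]
    rw [← hE_def, ← hF_def, ← ha_def, ← hb_def, ← ht_def]
    linear_combination hE2 + hF2
  have harg : ‖p₁ - p‖ ^ 2 - (F - E) ^ 2 = smom p p₁ - 4 := by
    rw [norm_sub_sq_real, hcomm, hs, ← ha_def, ← hb_def]
    linear_combination -hE2 - hF2
  have habEF : a * b ≤ E * F := by
    nlinarith [mul_pos hEpos hFpos, mul_nonneg ha hb, sq_nonneg (a - b)]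
  have hEF : 1 + t ≤ E * F := by
    nlinarith [mul_pos hEpos hFpos, sq_nonneg (a - b)]
  have hs4 : 0 ≤ smom p p₁ - 4 := by rw [hs]; linarith
  have hspos : 0 ≤ smom p p₁ := by linarith
  have hg : gmom p p₁ = (1/2) * Real.sqrt (smom p p₁ - 4) := by
    rw [gmom, ← hE_def, ← hF_def, harg]
  have hL0 : 0 ≤ gmom p p₁ * Real.sqrt (smom p p₁) / (E * F) := by
    rw [hg]; positivity
  have hR0 : (0:ℝ) ≤ ‖(E)⁻¹ • p - (F)⁻¹ • p₁‖ := norm_nonneg _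
  -- squared RHS
  have hRsq : ‖(E)⁻¹ • p - (F)⁻¹ • p₁‖ ^ 2
      = E⁻¹ ^ 2 * a ^ 2 - 2 * (E⁻¹ * F⁻¹ * t) + F⁻¹ ^ 2 * b ^ 2 := by
    rw [norm_sub_sq_real, real_inner_smul_left, real_inner_smul_right,
      norm_smul, norm_smul, mul_pow, mul_pow]
    rw [Real.norm_eq_abs, Real.norm_eq_abs, abs_of_pos (inv_pos.mpr hEpos),
      abs_of_pos (inv_pos.mpr hFpos), ← ht_def, ← ha_def, ← hb_def]
    ring
  -- squared LHS
  have hLsq : (gmom p p₁ * Real.sqrt (smom p p₁) / (E * F)) ^ 2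
      = (smom p p₁ - 4) * smom p p₁ / (4 * (E * F) ^ 2) := by
    rw [hg, div_pow, mul_pow, mul_pow, Real.sq_sqrt hs4, Real.sq_sqrt hspos]
    ring
  clear_value a b t E F
  have key : (gmom p p₁ * Real.sqrt (smom p p₁) / (E * F)) ^ 2
      ≤ ‖(E)⁻¹ • p - (F)⁻¹ • p₁‖ ^ 2 := by
    rw [hLsq, hRsq, hs]
    have hEne : E ≠ 0 := ne_of_gt hEpos
    have hFne : F ≠ 0 := ne_of_gt hFpos
    rw [div_le_iff₀ (by positivity)]
    have expand : (E⁻¹ ^ 2 * a ^ 2 - 2 * (E⁻¹ * F⁻¹ * t) + F⁻¹ ^ 2 * b ^ 2) * (4 * (E * F) ^ 2)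
        = 4 * (a ^ 2 * F ^ 2 - 2 * (t * (E * F)) + b ^ 2 * E ^ 2) := by
      field_simp
    have ha2 : a ^ 2 = E ^ 2 - 1 := by linarith
    have hb2 : b ^ 2 = F ^ 2 - 1 := by linarith
    rw [expand, ha2, hb2]
    rw [ha2, hb2] at ht
    nlinarith [ht]
  calc gmom p p₁ * Real.sqrt (smom p p₁) / (E * F)
      = Real.sqrt ((gmom p p₁ * Real.sqrt (smom p p₁) / (E * F)) ^ 2) :=
        (Real.sqrt_sq hL0).symm
    _ ≤ Real.sqrt (‖(E)⁻¹ • p - (F)⁻¹ • p₁‖ ^ 2) := Real.sqrt_le_sqrt key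
    _ = ‖(E)⁻¹ • p - (F)⁻¹ • p₁‖ := Real.sqrt_sq hR0
end
end

section
/- Let p, p₁ ∈ ℝ³ and let ω ∈ ℝ³ be a unit vector with ω·(p₁/p₁₀ − p/p₀) ≥ 0. Define q = 2(p₀+p₁₀)p₀p₁₀·[ω·(p₁/p₁₀ − p/p₀)] / ((p₀+p₁₀)² − (ω·(p+p₁))²) (the denominator being positive since |ω·(p+p₁)| ≤ |p+p₁| < p₀+p₁₀). Then the post-collisional momenta p′ = p + qω and p₁′ = p₁ − qω conserve the total energy: √(1+|p+qω|²) + √(1+|p₁−qω|²) = p₀ + p₁₀. -/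
noncomputable section
open Real
open scoped RealInnerProductSpace

open EnskogK

namespace EnskogK

/-- `q(p,p₁,ω)` -/
def qfun (p p₁ ω : E3) : ℝ :=
  2 * (p0 p + p0 p₁) * p0 p * p0 p₁ * ⟪ω, (p0 p₁)⁻¹ • p₁ - (p0 p)⁻¹ • p⟫ /
    ((p0 p + p0 p₁) ^ 2 - ⟪ω, p + p₁⟫ ^ 2)

end EnskogK

/-- the purely algebraic core of energy conservation, over `ℝ` -/
private lemma key_algebra (E F a b q : ℝ) (hE1 : 1 ≤ E) (hF1 : 1 ≤ F)
    (ha' : a^2 ≤ E^2 - 1) (hb' : b^2 ≤ F^2 - 1)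
    (hq : q = 2*(E+F)*(E*b - F*a) / ((E+F)^2 - (a+b)^2)) :
    Real.sqrt (E^2 + 2*q*a + q^2) + Real.sqrt (F^2 - 2*q*b + q^2) = E + F := by
  have hE0 : (0:ℝ) < E := by linarith
  have hF0 : (0:ℝ) < F := by linarith
  have hab : a*b ≤ E*F - 1 := by
    rcases le_or_gt (a*b) 0 with h | h
    · nlinarith
    · have h1 : (a*b)^2 ≤ (E^2-1)*(F^2-1) := by
        have := mul_le_mul ha' hb' (by positivity) (by nlinarith)
        calc (a*b)^2 = a^2 * b^2 := by ring
        _ ≤ (E^2-1)*(F^2-1) := this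
      have h2 : (E^2-1)*(F^2-1) ≤ (E*F-1)^2 := by nlinarith [sq_nonneg (E-F)]
      have h3 : 0 ≤ E*F - 1 := by nlinarith
      nlinarith
  have hDpos : 0 < (E+F)^2 - (a+b)^2 := by nlinarith
  have hDne : (E+F)^2 - (a+b)^2 ≠ 0 := ne_of_gt hDpos
  set X : ℝ := E + 2*(E*b - F*a)*(a+b) / ((E+F)^2 - (a+b)^2) with hXdef
  set Y : ℝ := F - 2*(E*b - F*a)*(a+b) / ((E+F)^2 - (a+b)^2) with hYdef
  have hX2 : X^2 = E^2 + 2*q*a + q^2 := by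
    rw [hXdef, hq]
    field_simp
    ring
  have hY2 : Y^2 = F^2 - 2*q*b + q^2 := by
    rw [hYdef, hq]
    field_simp
    ring
  have hX0 : 0 ≤ X := by
    rw [hXdef]
    have key : 0 ≤ E * ((E+F)^2 - (a+b)^2) + 2*(E*b - F*a)*(a+b) := by
      have k1 : E^2*(a+b)^2 - 2*E*(E*b-F*a)*(a+b) ≤ a^2*(E+F)^2 := by
        have e : a^2*(E+F)^2 - (E^2*(a+b)^2 - 2*E*(E*b-F*a)*(a+b)) = (E*b - F*a)^2 := by
          ring
        linarith [sq_nonneg (E*b - F*a), e.ge, e.le]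
      have k2 : a^2*(E+F)^2 ≤ (E^2-1)*(E+F)^2 :=
        mul_le_mul_of_nonneg_right ha' (sq_nonneg _)
      have k3 : 0 ≤ E * (E * ((E+F)^2 - (a+b)^2) + 2*(E*b - F*a)*(a+b)) := by
        have e : E * (E * ((E+F)^2 - (a+b)^2) + 2*(E*b - F*a)*(a+b))
            = E^2*(E+F)^2 - (E^2*(a+b)^2 - 2*E*(E*b-F*a)*(a+b)) := by ring
        have e2 : E^2*(E+F)^2 - (E^2-1)*(E+F)^2 = (E+F)^2 := by ring
        linarith [sq_nonneg (E+F), e.ge, e.le, e2.ge, e2.le]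
      exact le_of_mul_le_mul_left
        (by linarith : E * 0 ≤ E * (E * ((E+F)^2 - (a+b)^2) + 2*(E*b - F*a)*(a+b))) hE0
    have h := div_nonneg key (le_of_lt hDpos)
    calc (0:ℝ) ≤ (E * ((E+F)^2 - (a+b)^2) + 2*(E*b - F*a)*(a+b)) / ((E+F)^2 - (a+b)^2) := h
    _ = E + 2*(E*b - F*a)*(a+b) / ((E+F)^2 - (a+b)^2) := by field_simp
  have hY0 : 0 ≤ Y := by
    rw [hYdef]
    have key : 0 ≤ F * ((E+F)^2 - (a+b)^2) - 2*(E*b - F*a)*(a+b) := by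
      have k1 : F^2*(a+b)^2 + 2*F*(E*b-F*a)*(a+b) ≤ b^2*(E+F)^2 := by
        have e : b^2*(E+F)^2 - (F^2*(a+b)^2 + 2*F*(E*b-F*a)*(a+b)) = (E*b - F*a)^2 := by
          ring
        linarith [sq_nonneg (E*b - F*a), e.ge, e.le]
      have k2 : b^2*(E+F)^2 ≤ (F^2-1)*(E+F)^2 :=
        mul_le_mul_of_nonneg_right hb' (sq_nonneg _)
      have k3 : 0 ≤ F * (F * ((E+F)^2 - (a+b)^2) - 2*(E*b - F*a)*(a+b)) := by
        have e : F * (F * ((E+F)^2 - (a+b)^2) - 2*(E*b - F*a)*(a+b))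
            = F^2*(E+F)^2 - (F^2*(a+b)^2 + 2*F*(E*b-F*a)*(a+b)) := by ring
        have e2 : F^2*(E+F)^2 - (F^2-1)*(E+F)^2 = (E+F)^2 := by ring
        linarith [sq_nonneg (E+F), e.ge, e.le, e2.ge, e2.le]
      exact le_of_mul_le_mul_left
        (by linarith : F * 0 ≤ F * (F * ((E+F)^2 - (a+b)^2) - 2*(E*b - F*a)*(a+b))) hF0
    have h := div_nonneg key (le_of_lt hDpos)
    calc (0:ℝ) ≤ (F * ((E+F)^2 - (a+b)^2) - 2*(E*b - F*a)*(a+b)) / ((E+F)^2 - (a+b)^2) := h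
    _ = F - 2*(E*b - F*a)*(a+b) / ((E+F)^2 - (a+b)^2) := by field_simp
  rw [← hX2, ← hY2, Real.sqrt_sq hX0, Real.sqrt_sq hY0, hXdef, hYdef]
  ring


/-- For a unit vector `ω` with `ω·(p₁/p₁₀ − p/p₀) ≥ 0`, the post-collisional momenta
`p′ = p + qω` and `p₁′ = p₁ − qω` conserve the total energy:
`√(1+|p+qω|²) + √(1+|p₁−qω|²) = p₀ + p₁₀`. -/
theorem energy_conservation (p p₁ ω : E3) (hω : ‖ω‖ = 1)
    (hpos : 0 ≤ ⟪ω, (p0 p₁)⁻¹ • p₁ - (p0 p)⁻¹ • p⟫) :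
    Real.sqrt (1 + ‖p + qfun p p₁ ω • ω‖ ^ 2) +
      Real.sqrt (1 + ‖p₁ - qfun p p₁ ω • ω‖ ^ 2) = p0 p + p0 p₁ := by
  clear hpos
  have hE1 : 1 ≤ p0 p := by
    rw [p0, Real.one_le_sqrt]; nlinarith [sq_nonneg ‖p‖]
  have hF1 : 1 ≤ p0 p₁ := by
    rw [p0, Real.one_le_sqrt]; nlinarith [sq_nonneg ‖p₁‖]
  have hE2 : (p0 p)^2 = 1 + ‖p‖^2 := by
    rw [p0]; exact Real.sq_sqrt (by positivity)
  have hF2 : (p0 p₁)^2 = 1 + ‖p₁‖^2 := by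
    rw [p0]; exact Real.sq_sqrt (by positivity)
  have ha : ⟪ω, p⟫^2 ≤ ‖p‖^2 := by
    have h := abs_real_inner_le_norm ω p
    rw [hω, one_mul] at h
    calc ⟪ω, p⟫^2 = |⟪ω, p⟫|^2 := (sq_abs _).symm
    _ ≤ ‖p‖^2 := by gcongr
  have hb : ⟪ω, p₁⟫^2 ≤ ‖p₁‖^2 := by
    have h := abs_real_inner_le_norm ω p₁
    rw [hω, one_mul] at h
    calc ⟪ω, p₁⟫^2 = |⟪ω, p₁⟫|^2 := (sq_abs _).symm
    _ ≤ ‖p₁‖^2 := by gcongr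
  set E := p0 p with hEdef
  set F := p0 p₁ with hFdef
  set a := ⟪ω, p⟫ with hadef
  set b := ⟪ω, p₁⟫ with hbdef
  have hE0 : (0:ℝ) < E := by linarith
  have hF0 : (0:ℝ) < F := by linarith
  have ha' : a^2 ≤ E^2 - 1 := by rw [hE2]; linarith
  have hb' : b^2 ≤ F^2 - 1 := by rw [hF2]; linarith
  have hq : qfun p p₁ ω = 2*(E+F)*(E*b - F*a) / ((E+F)^2 - (a+b)^2) := by
    rw [qfun, inner_sub_right, real_inner_smul_right, real_inner_smul_right, inner_add_right]
    rw [← hEdef, ← hFdef, ← hadef, ← hbdef]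
    congr 1
    field_simp
  set q := qfun p p₁ ω with hqdef
  have hnp : 1 + ‖p + q • ω‖^2 = E^2 + 2*q*a + q^2 := by
    rw [norm_add_sq_real, norm_smul, real_inner_smul_right, real_inner_comm, hω, hE2]
    simp [← hadef]; ring
  have hnp1 : 1 + ‖p₁ - q • ω‖^2 = F^2 - 2*q*b + q^2 := by
    rw [sub_eq_add_neg, ← neg_smul, norm_add_sq_real, norm_smul, real_inner_smul_right,
      real_inner_comm, hω, hF2]
    simp [← hbdef]; ring
  rw [hnp, hnp1]
  exact key_algebra E F a b q hE1 hF1 ha' hb' hq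
end
end
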